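/- Let (A, p, 0, ½, 1) be a mobi algebra and define ā = p(1,a,0), a·b = p(0,a,b), a⊕b = p(a,½,b). Then (A, ¯(), ⊕, ·, 1) is an IMM algebra in which 1̄ = 0 and 1̄ ⊕ 1 = ½. -/

import Mathlib

/-- A mobi algebra: a set with a ternary operation `p` and constants `e0`, `half`, `e1`. -/
structure MobiAlgebra (A : Type*) where
  p : A → A → A → A
  e0 : A
  half : A
  e1 : A
  A1 : p e1 half e0 = half
  A2 : ∀ a, p e0 a e1 = a
  A3 : ∀ a b, p a b a = a
  A4 : ∀ a b, p a e0 b = a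
  A5 : ∀ a b, p a e1 b = b
  A6 : ∀ a a' b, p a half b = p a' half b → a = a'
  A7 : ∀ a b c1 c2 c3, p a (p c1 c2 c3) b = p (p a c1 b) c2 (p a c3 b)
  A8 : ∀ a1 a2 b1 b2 c,
    p (p a1 c b1) half (p a2 c b2) = p (p a1 half a2) c (p b1 half b2)

/-- An involutive medial monoid (IMM) algebra. -/
structure IMM (B : Type*) where
  inv : B → B
  oplus : B → B → B
  mul : B → B → B
  one : B
  B1 : ∀ a, oplus a a = a
  B2 : ∀ a b, oplus a b = oplus b a
  B3 : ∀ a b c d, oplus (oplus a b) (oplus c d) = oplus (oplus a c) (oplus b d)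
  B4 : ∀ a b c, mul a (mul b c) = mul (mul a b) c
  B5 : ∀ a, mul a one = a
  B5' : ∀ a, mul one a = a
  B6 : ∀ a b c, mul a (oplus b c) = oplus (mul a b) (mul a c)
  B6' : ∀ a b c, mul (oplus a b) c = oplus (mul a c) (mul b c)
  B7 : ∀ a, inv (inv a) = a
  B8 : ∀ a b, inv (oplus a b) = oplus (inv a) (inv b)
  B9 : ∀ a, mul a (inv one) = inv one
  B9' : ∀ a, mul (inv one) a = inv one
  B10 : ∀ a, oplus (inv a) a = oplus (inv one) one

/-- Proposition 4.3: every mobi algebra gives rise to an IMM algebra via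
ā = p(1,a,0), a·b = p(0,a,b), a⊕b = p(a,½,b), in which 1̄ = 0 and 1̄⊕1 = ½. -/
theorem mobi_to_IMM {A : Type*} (M : MobiAlgebra A) :
    ∃ I : IMM A,
      I.inv = (fun a => M.p M.e1 a M.e0) ∧
      I.oplus = (fun a b => M.p a M.half b) ∧
      I.mul = (fun a b => M.p M.e0 a b) ∧
      I.one = M.e1 ∧
      I.inv I.one = M.e0 ∧
      I.oplus (I.inv I.one) I.one = M.half := by

  classical
  have hinv1 : M.p M.e1 M.e1 M.e0 = M.e0 := M.A5 _ _
  refine ⟨{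
    inv := fun a => M.p M.e1 a M.e0
    oplus := fun a b => M.p a M.half b
    mul := fun a b => M.p M.e0 a b
    one := M.e1
    B1 := fun a => M.A3 a M.half
    B2 := by
      intro a b
      have h := M.A7 a b M.e1 M.half M.e0
      rw [M.A1, M.A5, M.A4] at h
      exact h
    B3 := fun a b c d => M.A8 a c b d M.half
    B4 := by
      intro a b c
      have h := M.A7 M.e0 c M.e0 a b
      rw [M.A4] at h
      exact h.symm
    B5 := fun a => M.A2 a
    B5' := fun a => M.A5 M.e0 a
    B6 := by
      intro a b c
      have h := M.A8 M.e0 M.e0 b c a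
      rw [M.A3] at h
      exact h.symm
    B6' := by
      intro a b c
      exact M.A7 M.e0 c a M.half b
    B7 := by
      intro a
      have h := M.A7 M.e1 M.e0 M.e1 a M.e0
      rw [M.A5, M.A4, M.A2] at h
      exact h
    B8 := by
      intro a b
      exact M.A7 M.e1 M.e0 a M.half b
    B9 := by
      intro a
      rw [hinv1]
      exact M.A3 M.e0 a
    B9' := by
      intro a
      rw [hinv1]
      exact M.A4 M.e0 a
    B10 := by
      intro a
      have h := M.A8 M.e1 M.e0 M.e0 M.e1 a
      rw [M.A1, M.A2, M.A2, M.A3] at h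
      rw [hinv1, M.A2]
      exact h
  }, rfl, rfl, rfl, rfl, hinv1, by
    show M.p (M.p M.e1 M.e1 M.e0) M.half M.e1 = M.half
    rw [hinv1]; exact M.A2 M.half⟩
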